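/- (Key step of Theorem 3.1.) Under Assumption 1 (f(y) ≤ f(x) + ∇f(x)ᵀ(y−x) + (λ/2)‖y−x‖_p^p on S), with h convex, 0 < ε ≤ diam_p(S)^p λ, let y^k minimize L(y;x^k) = ∇f(x^k)ᵀ(y−x^k) + h(y) over S, let α_k minimize α ↦ α∇f(x^k)ᵀ(y^k − x^k) + α^p(λ/2)‖y^k−x^k‖_p^p + (1−α)h(x^k) + αh(y^k) over [0,1], and set x^{k+1} = (1−α_k)x^k + α_k y^k. Then ΔL_k := −∇f(x^k)ᵀ(y^k−x^k) + h(x^k) − h(y^k) satisfies ΔL_k ≤ (ε/(diam_p(S)^p λ))^{−1/(p−1)} (Φ(x^k) − Φ(x^{k+1})) + ε/2. -/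

import Mathlib

open scoped RealInnerProductSpace

noncomputable def lpNorm {n : ℕ} (p : ℝ) (x : EuclideanSpace ℝ (Fin n)) : ℝ :=
  (∑ i, |x i| ^ p) ^ (1 / p)

lemma lpNorm_rpow {n : ℕ} {p : ℝ} (hp : 0 < p) (z : EuclideanSpace ℝ (Fin n)) :
    lpNorm p z ^ p = ∑ i, |z i| ^ p := by
  unfold lpNorm
  rw [one_div, Real.rpow_inv_rpow
    (Finset.sum_nonneg fun i _ => Real.rpow_nonneg (abs_nonneg _) p) hp.ne']

lemma lpNorm_nonneg {n : ℕ} (p : ℝ) (z : EuclideanSpace ℝ (Fin n)) :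
    0 ≤ lpNorm p z :=
  Real.rpow_nonneg (Finset.sum_nonneg fun i _ => Real.rpow_nonneg (abs_nonneg _) p) _

theorem stmt_17 {n : ℕ} {S : Set (EuclideanSpace ℝ (Fin n))}
    (hS : Convex ℝ S) (hScpt : IsCompact S)
    {f h : EuclideanSpace ℝ (Fin n) → ℝ} {g : EuclideanSpace ℝ (Fin n) → EuclideanSpace ℝ (Fin n)}
    (hf : ∀ x, HasGradientAt f (g x) x)
    (hh : ConvexOn ℝ Set.univ h)
    {p lam : ℝ} (hp : 1 < p) (hlam : 0 < lam)
    (hdescent : ∀ x ∈ S, ∀ y ∈ S,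
      f y ≤ f x + ⟪g x, y - x⟫ + lam / 2 * lpNorm p (y - x) ^ p)
    {D : ℝ} (hD : IsGreatest {d : ℝ | ∃ u ∈ S, ∃ v ∈ S, d = lpNorm p (u - v)} D)
    {eps : ℝ} (heps0 : 0 < eps) (heps : eps ≤ D ^ p * lam)
    {xk yk : EuclideanSpace ℝ (Fin n)} (hxk : xk ∈ S) (hyk : yk ∈ S)
    (hminy : IsMinOn (fun y => ⟪g xk, y - xk⟫ + h y) S yk)
    {ak : ℝ} (hak : ak ∈ Set.Icc (0 : ℝ) 1)
    (hmina : IsMinOn (fun a : ℝ =>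
        a * ⟪g xk, yk - xk⟫ + a ^ p * (lam / 2) * lpNorm p (yk - xk) ^ p
          + (1 - a) * h xk + a * h yk)
      (Set.Icc (0 : ℝ) 1) ak)
    {xk1 : EuclideanSpace ℝ (Fin n)} (hxk1 : xk1 = (1 - ak) • xk + ak • yk) :
    -⟪g xk, yk - xk⟫ + h xk - h yk
      ≤ (eps / (D ^ p * lam)) ^ (-(1 / (p - 1)))
          * ((f xk + h xk) - (f xk1 + h xk1)) + eps / 2 := by
  have hp0 : (0:ℝ) < p := by linarith
  have hp1 : (0:ℝ) < p - 1 := by linarith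
  set gv := ⟪g xk, yk - xk⟫ with hgv
  set A := lpNorm p (yk - xk) ^ p with hA
  have hN0 : 0 ≤ lpNorm p (yk - xk) := lpNorm_nonneg _ _
  have hA0 : 0 ≤ A := Real.rpow_nonneg hN0 _
  have hak0 : 0 ≤ ak := hak.1
  have hak1 : ak ≤ 1 := hak.2
  -- x^{k+1} ∈ S
  have hxk1S : xk1 ∈ S := by
    rw [hxk1]; exact hS hxk hyk (by linarith) hak0 (by ring)
  -- displacement
  have hz : xk1 - xk = ak • (yk - xk) := by rw [hxk1]; module
  have hscale : lpNorm p (xk1 - xk) ^ p = ak ^ p * A := by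
    rw [hz, hA, lpNorm_rpow hp0, lpNorm_rpow hp0, Finset.mul_sum]
    congr 1; ext i
    have : |(ak • (yk - xk)) i| = ak * |(yk - xk) i| := by
      simp [PiLp.smul_apply, smul_eq_mul, abs_mul, abs_of_nonneg hak0]
    rw [this, Real.mul_rpow hak0 (abs_nonneg _)]
  have hinner : ⟪g xk, xk1 - xk⟫ = ak * gv := by
    rw [hz, real_inner_smul_right]
  -- bound on Φ(x^{k+1}) through the upper model at ak
  have hfd := hdescent xk hxk xk1 hxk1S
  rw [hinner, hscale] at hfd
  have hhc : h xk1 ≤ (1 - ak) * h xk + ak * h yk := by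
    have := hh.2 (Set.mem_univ xk) (Set.mem_univ yk) (by linarith : (0:ℝ) ≤ 1 - ak)
      hak0 (by ring)
    simpa [← hxk1] using this
  have hPhi : f xk1 + h xk1
      ≤ f xk + (ak * gv + ak ^ p * (lam / 2) * A + (1 - ak) * h xk + ak * h yk) := by
    have : lam / 2 * (ak ^ p * A) = ak ^ p * (lam / 2) * A := by ring
    nlinarith [hfd, hhc]
  -- the chosen step size
  set t := eps / (D ^ p * lam) with htdef
  have hDl : 0 < D ^ p * lam := lt_of_lt_of_le heps0 heps
  have ht0 : 0 < t := div_pos heps0 hDl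
  have ht1 : t ≤ 1 := (div_le_one hDl).mpr heps
  set α := t ^ (1 / (p - 1)) with hαdef
  have hα0 : 0 < α := Real.rpow_pos_of_pos ht0 _
  have hα1 : α ≤ 1 := Real.rpow_le_one ht0.le ht1 (by positivity)
  have hαmem : α ∈ Set.Icc (0:ℝ) 1 := ⟨hα0.le, hα1⟩
  have hαp1 : α ^ (p - 1) = t := by
    rw [hαdef, ← Real.rpow_mul ht0.le, one_div_mul_cancel hp1.ne', Real.rpow_one]
  have hαp : α ^ p = α * α ^ (p - 1) := by
    nth_rewrite 2 [← Real.rpow_one α]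
    rw [← Real.rpow_add hα0]; ring_nf
  -- optimality of ak in the line search
  have hmin : ak * gv + ak ^ p * (lam / 2) * A + (1 - ak) * h xk + ak * h yk
      ≤ α * gv + α ^ p * (lam / 2) * A + (1 - α) * h xk + α * h yk := hmina hαmem
  -- key inequality: ΔΦ ≥ α ΔL − α^p (λ/2) A
  have hkey : α * (-gv + h xk - h yk) - α ^ p * (lam / 2) * A
      ≤ (f xk + h xk) - (f xk1 + h xk1) := by
    nlinarith [hPhi, hmin]
  -- bound the quadratic-like term
  have hND : lpNorm p (yk - xk) ≤ D := hD.2 ⟨yk, hyk, xk, hxk, rfl⟩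
  have hAD : A ≤ D ^ p := Real.rpow_le_rpow hN0 hND hp0.le
  have hterm : α ^ (p - 1) * (lam / 2) * A ≤ eps / 2 := by
    rw [hαp1]
    have : t * (lam / 2) * A ≤ t * (lam / 2) * D ^ p := by
      apply mul_le_mul_of_nonneg_left hAD (by positivity)
    calc t * (lam / 2) * A ≤ t * (lam / 2) * D ^ p := this
      _ = eps / 2 := by rw [htdef]; field_simp; ring_nf; exact mul_inv_cancel₀ (left_ne_zero_of_mul hDl.ne')
  -- conclude
  have hcoef : (eps / (D ^ p * lam)) ^ (-(1 / (p - 1))) = α⁻¹ := by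
    rw [← htdef, Real.rpow_neg ht0.le, hαdef]
  rw [hcoef]
  have hmain : α * (-gv + h xk - h yk)
      ≤ ((f xk + h xk) - (f xk1 + h xk1)) + α * (eps / 2) := by
    have he : α ^ p * (lam / 2) * A = α * (α ^ (p - 1) * (lam / 2) * A) := by
      rw [hαp]; ring
    have hb := mul_le_mul_of_nonneg_left hterm hα0.le
    linarith [hkey, hb, he]
  have := mul_le_mul_of_nonneg_left hmain (inv_nonneg.mpr hα0.le)
  rw [← mul_assoc, inv_mul_cancel₀ hα0.ne', one_mul] at this
  calc -gv + h xk - h yk ≤ α⁻¹ * (((f xk + h xk) - (f xk1 + h xk1)) + α * (eps / 2)) := this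
    _ = α⁻¹ * ((f xk + h xk) - (f xk1 + h xk1)) + eps / 2 := by
        rw [mul_add, ← mul_assoc, inv_mul_cancel₀ hα0.ne', one_mul]
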